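/- Let k be a field and let F be the 4-dimensional k-vector space with basis {a, b, c, d}, with right coproduct Δ given by Δa = a⊗a + b⊗c, Δb = a⊗b + b⊗d, Δc = d⊗c + c⊗a, Δd = d⊗d + c⊗b, and left coproduct Δ̃ given by Δ̃a = b⊗a + a⊗c, Δ̃b = b⊗b + a⊗d, Δ̃c = c⊗c + d⊗a, Δ̃d = c⊗d + d⊗b. Then: (1) Δ̃ is coassociative; (2) the entanglement equation (Δ̃ ⊗ id) ∘ Δ = (id ⊗ Δ) ∘ Δ̃ holds; (3) also (Δ ⊗ id) ∘ Δ̃ = (id ⊗ Δ̃) ∘ Δ holds (so (F, Δ, Δ̃) is an achiral coassociative L-coalgebra); and (4) the linear map ε̃ : F → k with ε̃(a) = ε̃(d) = 0 and ε̃(b) = ε̃(c) = 1 is a counit for Δ̃: (ε̃ ⊗ id) ∘ Δ̃ = id = (id ⊗ ε̃) ∘ Δ̃. -/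

import Mathlib

open TensorProduct

noncomputable section

variable {k V : Type*} [Field k] [AddCommGroup V] [Module k V]

/-- `(Δ' ⊗ id) ∘ Δ` composed with the standard associator, as a map `V → V ⊗ (V ⊗ V)`. -/
def lcomp (Δ' Δ : V →ₗ[k] V ⊗[k] V) : V →ₗ[k] V ⊗[k] (V ⊗[k] V) :=
  (TensorProduct.assoc k V V V).toLinearMap ∘ₗ TensorProduct.map Δ' LinearMap.id ∘ₗ Δ

/-- `(id ⊗ Δ') ∘ Δ` as a map `V → V ⊗ (V ⊗ V)`. -/
def rcomp (Δ' Δ : V →ₗ[k] V ⊗[k] V) : V →ₗ[k] V ⊗[k] (V ⊗[k] V) :=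
  TensorProduct.map LinearMap.id Δ' ∘ₗ Δ

/-- Coassociativity of a coproduct: `(Δ ⊗ id) ∘ Δ = (id ⊗ Δ) ∘ Δ`. -/
def Coassoc (Δ : V →ₗ[k] V ⊗[k] V) : Prop := lcomp Δ Δ = rcomp Δ Δ

/-- `(D, Δ, Δ̃)` is a coassociative co-dialgebra: both coproducts are coassociative,
`(id ⊗ Δ) ∘ Δ = (id ⊗ Δ̃) ∘ Δ`, `(Δ̃ ⊗ id) ∘ Δ̃ = (Δ ⊗ id) ∘ Δ̃`, and the entanglement
equation `(Δ̃ ⊗ id) ∘ Δ = (id ⊗ Δ) ∘ Δ̃` holds. -/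
def CoDialgebra (Δ Δ' : V →ₗ[k] V ⊗[k] V) : Prop :=
  Coassoc Δ ∧ Coassoc Δ' ∧
  rcomp Δ Δ = rcomp Δ' Δ ∧
  lcomp Δ' Δ' = lcomp Δ Δ' ∧
  lcomp Δ' Δ = rcomp Δ Δ'

/-- For the 4-dimensional space `F` with basis `{a, b, c, d}` and the right
coproduct `Δ` (from the line-extension of the `(2,1)`-De Bruijn graph) and left coproduct
`Δ̃` as given: `Δ̃` is coassociative, the entanglement equation `(Δ̃ ⊗ id)Δ = (id ⊗ Δ)Δ̃`
holds, also `(Δ ⊗ id)Δ̃ = (id ⊗ Δ̃)Δ` (so `(F, Δ, Δ̃)` is achiral), and `ε̃` with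
`ε̃(a) = ε̃(d) = 0`, `ε̃(b) = ε̃(c) = 1` is a counit for `Δ̃`. -/
theorem stmt9 (k F : Type*) [Field k] [AddCommGroup F] [Module k F]
    (bs : Module.Basis (Fin 4) k F)
    (a b c d : F) (hab : a = bs 0) (hbb : b = bs 1) (hcb : c = bs 2) (hdb : d = bs 3)
    (Δ Δ' : F →ₗ[k] F ⊗[k] F)
    (hΔa : Δ a = a ⊗ₜ[k] a + b ⊗ₜ[k] c)
    (hΔb : Δ b = a ⊗ₜ[k] b + b ⊗ₜ[k] d)
    (hΔc : Δ c = d ⊗ₜ[k] c + c ⊗ₜ[k] a)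
    (hΔd : Δ d = d ⊗ₜ[k] d + c ⊗ₜ[k] b)
    (hΔ'a : Δ' a = b ⊗ₜ[k] a + a ⊗ₜ[k] c)
    (hΔ'b : Δ' b = b ⊗ₜ[k] b + a ⊗ₜ[k] d)
    (hΔ'c : Δ' c = c ⊗ₜ[k] c + d ⊗ₜ[k] a)
    (hΔ'd : Δ' d = c ⊗ₜ[k] d + d ⊗ₜ[k] b)
    (ε' : F →ₗ[k] k)
    (hεa : ε' a = 0) (hεd : ε' d = 0) (hεb : ε' b = 1) (hεc : ε' c = 1) :
    Coassoc Δ' ∧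
    lcomp Δ' Δ = rcomp Δ Δ' ∧
    lcomp Δ Δ' = rcomp Δ' Δ ∧
    (TensorProduct.lid k F).toLinearMap ∘ₗ TensorProduct.map ε' LinearMap.id ∘ₗ Δ'
      = LinearMap.id ∧
    (TensorProduct.rid k F).toLinearMap ∘ₗ TensorProduct.map LinearMap.id ε' ∘ₗ Δ'
      = LinearMap.id := by

  subst hab hbb hcb hdb
  refine ⟨?_, ?_, ?_, ?_, ?_⟩ <;>
  · apply bs.ext
    intro i
    fin_cases i <;>
    · simp only [Fin.zero_eta, Fin.mk_one, Fin.reduceFinMk, Coassoc, lcomp, rcomp, LinearMap.comp_apply, hΔa, hΔb, hΔc, hΔd,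
        hΔ'a, hΔ'b, hΔ'c, hΔ'd, map_add, TensorProduct.map_tmul, LinearMap.id_apply,
        LinearEquiv.coe_coe, TensorProduct.assoc_tmul, TensorProduct.add_tmul, TensorProduct.tmul_add, hεa, hεb, hεc, hεd,
        TensorProduct.lid_tmul, TensorProduct.rid_tmul, one_smul, zero_smul]
      try abel
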